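/- Let N, n, m, q be natural numbers with n = m + q, q ≥ 1 and N > 2n − m. Let b ∈ ℝ^{q+1} and c ∈ ℝ^{m+1} be nonzero vectors and set a = c ⋆ b ∈ ℝ^{n+1}. Then the matrix T_{N−n}(a) T_{N−n}(a)ᵀ T_{N−2n+m}(b)ᵀ ∈ ℝ^{(N−n)×(N−2n+m)} has full column rank N − 2n + m. -/
import Mathlib


open Matrix

/-- Banded Toeplitz matrix `T_k(a)` of a coefficient vector `a = (a_n, …, a_1, a_0)`:
entry `(i,j)` equals the coefficient `a_{n-(j-i)}` (vector component `j - i`, since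
component `t` of the vector is the coefficient `a_{n-t}`) when `0 ≤ j - i ≤ n`, else `0`.
The number of columns is passed explicitly (intended: `N = k + n`). -/
def toep {R : Type*} [Semiring R] (k N n : ℕ) (a : Fin (n + 1) → R) :
    Matrix (Fin k) (Fin N) R :=
  Matrix.of fun i j =>
    if h : i.val ≤ j.val ∧ j.val - i.val ≤ n then a ⟨j.val - i.val, by omega⟩ else 0

/-- Hankel matrix `H_q(y) ∈ R^{(N-q) × (q+1)}` with entries `(H_q(y))_{i,j} = y_{i+j}` (0-based). -/
def hank {R : Type*} [Semiring R] (N q : ℕ) (y : Fin N → R) :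
    Matrix (Fin (N - q)) (Fin (q + 1)) R :=
  Matrix.of fun i j => y ⟨i.val + j.val, by have hi := i.isLt; have hj := j.isLt; omega⟩

/-- Convolution of coefficient vectors: `(c ⋆ b)_k = Σ_{i+j=k} c_i b_j`. -/
def convVec {R : Type*} [Semiring R] (m q : ℕ) (c : Fin (m + 1) → R) (b : Fin (q + 1) → R) :
    Fin (m + q + 1) → R :=
  fun k => ∑ i : Fin (m + 1), ∑ j : Fin (q + 1), if i.val + j.val = k.val then c i * b j else 0

lemma exists_least_nonzero {n : ℕ} (x : Fin n → ℝ) (hx : x ≠ 0) :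
    ∃ t : Fin n, x t ≠ 0 ∧ ∀ s : Fin n, s.val < t.val → x s = 0 := by
  classical
  have hex : ∃ t : ℕ, ∃ h : t < n, x ⟨t, h⟩ ≠ 0 := by
    by_contra hcon
    push_neg at hcon
    exact hx (funext fun i => hcon i.val i.isLt)
  obtain ⟨hlt, hne⟩ := Nat.find_spec hex
  refine ⟨⟨Nat.find hex, hlt⟩, hne, ?_⟩
  intro s hs
  have := Nat.find_min hex (m := s.val) hs
  push_neg at this
  have := this s.isLt
  simpa using this

lemma toep_vecMul_eq_zero {k N n : ℕ} (hkN : N = k + n) (a : Fin (n + 1) → ℝ) (ha : a ≠ 0)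
    (v : Fin k → ℝ) (hv : v ᵥ* toep k N n a = 0) : v = 0 := by
  obtain ⟨t, hat, hmin⟩ := exists_least_nonzero a ha
  have key : ∀ s : ℕ, ∀ hs : s < k, v ⟨s, hs⟩ = 0 := by
    intro s
    induction s using Nat.strong_induction_on with
    | _ s IH =>
      intro hs
      have htn : t.val ≤ n := by omega
      have hj : t.val + s < N := by omega
      have h0 := congrFun hv ⟨t.val + s, hj⟩
      simp only [Pi.zero_apply, vecMul, dotProduct] at h0
      rw [Finset.sum_eq_single (⟨s, hs⟩ : Fin k)] at h0
      · have hentry : toep k N n a ⟨s, hs⟩ ⟨t.val + s, hj⟩ = a t := by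
          have hcond : s ≤ t.val + s ∧ t.val + s - s ≤ n := ⟨by omega, by omega⟩
          simp only [toep, Matrix.of_apply, dif_pos hcond]
          congr 1
          exact Fin.ext (show (t : ℕ) + s - s = (t : ℕ) by omega)
        rw [hentry] at h0
        exact (mul_eq_zero.mp h0).resolve_right hat
      · intro r _ hr
        by_cases hlt : r.val < s
        · have : v r = 0 := IH r.val hlt r.isLt
          rw [this, zero_mul]
        · have hgt : s < r.val := by
            rcases Nat.lt_or_ge s r.val with h | h
            · exact h
            · exfalso; exact hr (Fin.ext (show r.val = s by omega))
          have hz : toep k N n a r ⟨t.val + s, hj⟩ = 0 := by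
            by_cases hc2 : r.val ≤ t.val + s ∧ t.val + s - r.val ≤ n
            · simp only [toep, Matrix.of_apply, dif_pos hc2]
              exact hmin _ (show (t : ℕ) + s - (r : ℕ) < (t : ℕ) by omega)
            · simp only [toep, Matrix.of_apply, dif_neg hc2]
          rw [hz, mul_zero]
      · intro h; exact absurd (Finset.mem_univ _) h
  funext i
  exact key i.val i.isLt

lemma convVec_ne_zero (m q : ℕ) (c : Fin (m + 1) → ℝ) (b : Fin (q + 1) → ℝ)
    (hc : c ≠ 0) (hb : b ≠ 0) : convVec m q c b ≠ 0 := by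
  obtain ⟨i₀, hci0, hcmin⟩ := exists_least_nonzero c hc
  obtain ⟨j₀, hbj0, hbmin⟩ := exists_least_nonzero b hb
  intro h0
  have hk : i₀.val + j₀.val < m + q + 1 := by omega
  have hsum := congrFun h0 ⟨i₀.val + j₀.val, hk⟩
  simp only [convVec, Pi.zero_apply] at hsum
  rw [Finset.sum_eq_single i₀] at hsum
  · rw [Finset.sum_eq_single j₀] at hsum
    · simp only [if_pos rfl] at hsum
      exact (mul_ne_zero hci0 hbj0) hsum
    · intro j _ hj
      rw [if_neg]
      intro hEq
      exact hj (Fin.ext (by simp at hEq ⊢; omega))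
    · intro h; exact absurd (Finset.mem_univ _) h
  · intro i _ hi
    apply Finset.sum_eq_zero
    intro j _
    by_cases hEq : i.val + j.val = i₀.val + j₀.val
    · have hEq' : i.val + j.val = (⟨i₀.val + j₀.val, hk⟩ : Fin (m + q + 1)).val := by
        simpa using hEq
      rw [if_pos hEq']
      have hne : i.val ≠ i₀.val := fun h => hi (Fin.ext h)
      by_cases hlt : i.val < i₀.val
      · rw [hcmin i hlt, zero_mul]
      · have : j.val < j₀.val := by omega
        rw [hbmin j this, mul_zero]
    · rw [if_neg (by simpa using hEq)]
  · intro h; exact absurd (Finset.mem_univ _) h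

/-- For nonzero `b` and `c` with `a = c ⋆ b` (and `n = m + q`), the matrix
`T_{N-n}(a) T_{N-n}(a)ᵀ T_{N-2n+m}(b)ᵀ` has full column rank `N - 2n + m`. -/
theorem stmt11 (N m q : ℕ) (hq : 1 ≤ q) (hN : m + 2 * q < N)
    (b : Fin (q + 1) → ℝ) (c : Fin (m + 1) → ℝ) (hb : b ≠ 0) (hc : c ≠ 0) :
    (toep (N - (m + q)) N (m + q) (convVec m q c b) *
      (toep (N - (m + q)) N (m + q) (convVec m q c b))ᵀ *
      (toep (N - (m + 2 * q)) (N - (m + q)) q b)ᵀ).rank = N - (m + 2 * q) := by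
  have ha : convVec m q c b ≠ 0 := convVec_ne_zero m q c b hc hb
  set a := convVec m q c b with hadef
  set A := toep (N - (m + q)) N (m + q) a with hA
  set B := toep (N - (m + 2 * q)) (N - (m + q)) q b with hB
  have hkA : N = (N - (m + q)) + (m + q) := by omega
  have hkB : N - (m + q) = (N - (m + 2 * q)) + q := by omega
  have hinj : Function.Injective (A * Aᵀ * Bᵀ).mulVecLin := by
    rw [← LinearMap.ker_eq_bot, LinearMap.ker_eq_bot']
    intro x hx
    simp only [mulVecLin_apply] at hx
    have hx' : A *ᵥ (Aᵀ *ᵥ (Bᵀ *ᵥ x)) = 0 := by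
      rw [mulVec_mulVec, mulVec_mulVec]; exact hx
    have hu : Aᵀ *ᵥ (Bᵀ *ᵥ x) = 0 := by
      have h1 : (Aᵀ *ᵥ (Bᵀ *ᵥ x)) ⬝ᵥ (Aᵀ *ᵥ (Bᵀ *ᵥ x)) = 0 := by
        calc (Aᵀ *ᵥ (Bᵀ *ᵥ x)) ⬝ᵥ (Aᵀ *ᵥ (Bᵀ *ᵥ x))
            = ((Bᵀ *ᵥ x) ᵥ* A) ⬝ᵥ (Aᵀ *ᵥ (Bᵀ *ᵥ x)) := by rw [mulVec_transpose]
          _ = (Bᵀ *ᵥ x) ⬝ᵥ (A *ᵥ (Aᵀ *ᵥ (Bᵀ *ᵥ x))) := (dotProduct_mulVec _ A _).symm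
          _ = 0 := by rw [hx']; simp
      exact dotProduct_self_eq_zero.mp h1
    have hz0 : Bᵀ *ᵥ x = 0 := by
      apply toep_vecMul_eq_zero hkA a ha
      rw [← mulVec_transpose]; exact hu
    apply toep_vecMul_eq_zero hkB b hb
    rw [← mulVec_transpose]; exact hz0
  rw [Matrix.rank, LinearMap.finrank_range_of_inj hinj]
  simp
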